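/- Let A₀ be the 3×3 matrix with rows (2,0,1),(0,2,1),(0,0,1) and C the permutation matrix with rows (0,1,0),(0,0,1),(1,0,0). Then A₀·C has characteristic polynomial X^3 − X^2 − 2X − 4, this polynomial has a unique positive real root ρ, its two other (complex) roots have absolute value strictly less than ρ, and ρ = 2/η where η is the real root of X^3 + X^2 + X − 2. -/

import Mathlib

open Polynomial

lemma root_big' (ρ : ℝ) (h0 : 0 < ρ) (h : ρ ^ 3 - ρ ^ 2 - 2 * ρ - 4 = 0) : 2.2 < ρ := by
  by_contra hle
  push_neg at hle
  nlinarith [sq_nonneg ρ, sq_nonneg (ρ - 2.2), mul_pos h0 h0]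

lemma root_unique' (a b : ℝ) (ha0 : 0 < a) (ha : a ^ 3 - a ^ 2 - 2 * a - 4 = 0)
    (hb0 : 0 < b) (hb : b ^ 3 - b ^ 2 - 2 * b - 4 = 0) : a = b := by
  have h1 := root_big' a ha0 ha
  have h2 := root_big' b hb0 hb
  have key : (a - b) * (a ^ 2 + a * b + b ^ 2 - a - b - 2) = 0 := by
    linear_combination ha - hb
  have hpos : 0 < a ^ 2 + a * b + b ^ 2 - a - b - 2 := by nlinarith
  rcases mul_eq_zero.mp key with h | h
  · linarith
  · linarith

lemma root_exists' : ∃ ρ : ℝ, 0 < ρ ∧ ρ ^ 3 - ρ ^ 2 - 2 * ρ - 4 = 0 := by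
  have hc : ContinuousOn (fun x : ℝ => x ^ 3 - x ^ 2 - 2 * x - 4) (Set.Icc 2 3) := by
    fun_prop
  have := intermediate_value_Icc (by norm_num : (2:ℝ) ≤ 3) hc
  have h0 : (0:ℝ) ∈ Set.Icc ((fun x : ℝ => x ^ 3 - x ^ 2 - 2 * x - 4) 2)
      ((fun x : ℝ => x ^ 3 - x ^ 2 - 2 * x - 4) 3) := by
    norm_num
  obtain ⟨x, hx, hx0⟩ := this h0
  exact ⟨x, by linarith [hx.1], hx0⟩

lemma cpx_part' (ρ : ℝ) (h0 : 0 < ρ) (hρ : ρ ^ 3 - ρ ^ 2 - 2 * ρ - 4 = 0)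
    (z : ℂ) (hz : z ^ 3 - z ^ 2 - 2 * z - 4 = 0) (hne : z ≠ (ρ : ℂ)) :
    ‖z‖ < ρ := by
  have hbig := root_big' ρ h0 hρ
  have hρc : (ρ:ℂ)^3 - (ρ:ℂ)^2 - 2*(ρ:ℂ) - 4 = 0 := by
    have : ((ρ^3 - ρ^2 - 2*ρ - 4 : ℝ) : ℂ) = 0 := by rw [hρ]; simp
    push_cast at this
    linear_combination this
  have hfac : (z - ρ) * (z^2 + ((ρ:ℂ)-1)*z + ((ρ:ℂ)^2-(ρ:ℂ)-2)) = 0 := by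
    linear_combination hz - hρc
  have hz2 : z^2 + ((ρ:ℂ)-1)*z + ((ρ:ℂ)^2-(ρ:ℂ)-2) = 0 := by
    rcases mul_eq_zero.mp hfac with h | h
    · exact absurd (sub_eq_zero.mp h) hne
    · exact h
  by_cases him : z.im = 0
  · have hzr : z = (z.re : ℂ) := by
      apply Complex.ext <;> simp [him]
    set r := z.re
    have : ((r^2 + (ρ-1)*r + (ρ^2-ρ-2) : ℝ) : ℂ) = 0 := by
      push_cast
      rw [hzr] at hz2
      linear_combination hz2
    have hreal : r^2 + (ρ-1)*r + (ρ^2-ρ-2) = 0 := by exact_mod_cast this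
    nlinarith [sq_nonneg (2*r + ρ - 1)]
  · set w := (starRingEnd ℂ) z with hw
    have hw2 : w^2 + ((ρ:ℂ)-1)*w + ((ρ:ℂ)^2-(ρ:ℂ)-2) = 0 := by
      have := congrArg (starRingEnd ℂ) hz2
      simpa [map_ofNat, Complex.conj_ofReal] using this
    have hzw : z ≠ w := by
      intro h
      exact him (Complex.conj_eq_iff_im.mp h.symm)
    have hsub : (z - w) * (z + w + ((ρ:ℂ)-1)) = 0 := by
      linear_combination hz2 - hw2
    have hsum : z + w = 1 - ρ := by
      rcases mul_eq_zero.mp hsub with h | h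
      · exact absurd (sub_eq_zero.mp h) hzw
      · linear_combination h
    have hprod : z * w = (ρ:ℂ)^2 - ρ - 2 := by
      linear_combination z * hsum - hz2
    have hnsq : ((Complex.normSq z : ℝ) : ℂ) = ((ρ^2 - ρ - 2 : ℝ) : ℂ) := by
      rw [← Complex.mul_conj]
      push_cast
      linear_combination hprod
    have hnsq' : Complex.normSq z = ρ^2 - ρ - 2 := by exact_mod_cast hnsq
    have habs : ‖z‖^2 = ρ^2 - ρ - 2 := by
      rw [Complex.sq_norm, hnsq']
    nlinarith [norm_nonneg z]

lemma eta_part' (ρ : ℝ) (h0 : 0 < ρ) (hρ : ρ ^ 3 - ρ ^ 2 - 2 * ρ - 4 = 0)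
    (η : ℝ) (hη : η ^ 3 + η ^ 2 + η - 2 = 0) : ρ = 2 / η := by
  have hηpos : 0 < η := by
    by_contra h
    push_neg at h
    nlinarith [sq_nonneg (2*η + 1), sq_nonneg η]
  have hroot : (2/η) ^ 3 - (2/η) ^ 2 - 2 * (2/η) - 4 = 0 := by
    have hne : η ≠ 0 := ne_of_gt hηpos
    field_simp
    linear_combination (-4 : ℝ) * hη
  exact root_unique' ρ (2/η) h0 hρ (by positivity) hroot

theorem charpoly_A0C :
    let A : Matrix (Fin 3) (Fin 3) ℝ := !![2, 0, 1; 0, 2, 1; 0, 0, 1]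
    let Cm : Matrix (Fin 3) (Fin 3) ℝ := !![0, 1, 0; 0, 0, 1; 1, 0, 0]
    (A * Cm).charpoly = X ^ 3 - X ^ 2 - Polynomial.C 2 * X - Polynomial.C 4 ∧
    (∃! ρ : ℝ, 0 < ρ ∧ ρ ^ 3 - ρ ^ 2 - 2 * ρ - 4 = 0) ∧
    (∀ ρ : ℝ, 0 < ρ → ρ ^ 3 - ρ ^ 2 - 2 * ρ - 4 = 0 →
      (∀ z : ℂ, z ^ 3 - z ^ 2 - 2 * z - 4 = 0 → z ≠ (ρ : ℂ) → ‖z‖ < ρ) ∧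
      (∀ η : ℝ, η ^ 3 + η ^ 2 + η - 2 = 0 → ρ = 2 / η)) := by
  intro A Cm
  refine ⟨?_, ?_, ?_⟩
  · have h : A * Cm = !![1,2,0;1,0,2;1,0,0] := by
      simp [A, Cm, Matrix.mul_fin_three]
    rw [h, Matrix.charpoly, Matrix.det_fin_three]
    simp [Matrix.charmatrix_apply, Matrix.one_apply, Matrix.vecHead, Matrix.vecTail, map_ofNat]
    ring
  · obtain ⟨x, hx0, hx⟩ := root_exists'
    exact ⟨x, ⟨hx0, hx⟩, fun y ⟨hy0, hy⟩ => root_unique' y x hy0 hy hx0 hx⟩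
  · intro ρ h0 hρ
    exact ⟨fun z hz hne => cpx_part' ρ h0 hρ z hz hne, fun η hη => eta_part' ρ h0 hρ η hη⟩
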